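/- Fix c ≥ 1 and set v_n := (2c)^{−|n|} for n ∈ ℤ. Let V be the bounded invertible weighted bilateral shift on H₀ := ℓ²(ℤ,ℂ) with (Vf)(n) = (v_n/v_{n−1})·f(n−1), and let V̂ := V ⊕ (V*)⁻¹ act on H₀ ⊕₂ H₀. Suppose L is a closed subspace of H₀ ⊕₂ H₀ with V̂(L) = L such that the spectrum of the operator induced by V̂ on L is contained in { z ∈ ℂ : |z| ≤ c }. Then L ⊆ H₀ ⊕ {0}, L has the form L₁ ⊕ {0} for a closed subspace L₁ ⊆ H₀ with V(L₁) = L₁ and |spectrum(V|L₁)| ≤ c, and L₁ ≠ H₀; in particular L is properly contained in H₀ ⊕ {0}. -/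

import Mathlib

noncomputable section
open Real ContinuousLinearMap

/-- The Hilbert space `ℓ²(ℤ, ℂ)` of square-summable two-sided complex sequences. -/
abbrev l2 : Type := lp (fun _ : ℤ => ℂ) 2

/-- The Hilbert direct sum `ℓ²(ℤ,ℂ) ⊕₂ ℓ²(ℤ,ℂ)`. -/
abbrev Hl : Type := WithLp 2 (l2 × l2)

/-- The continuous linear equivalence between `Hl` and `l2 × l2`. -/
def e : Hl ≃L[ℂ] l2 × l2 := WithLp.prodContinuousLinearEquiv 2 ℂ l2 l2

/-- The direct sum `A ⊕ B` of two bounded operators acting on `Hl`. -/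
def hatOp (A B : l2 →L[ℂ] l2) : Hl →L[ℂ] Hl :=
  ((e.symm : l2 × l2 →L[ℂ] Hl).comp (A.prodMap B)).comp (e : Hl →L[ℂ] l2 × l2)

/-- The embedding of `l2` onto the first component `H₀ ⊕ {0}` of `Hl`. -/
def incl₁ : l2 →L[ℂ] Hl :=
  (e.symm : l2 × l2 →L[ℂ] Hl).comp (ContinuousLinearMap.inl ℂ l2 l2)

/-- The restriction of a continuous linear map to an invariant submodule. -/
def restrictOp {H : Type*} [NormedAddCommGroup H] [InnerProductSpace ℂ H]
    (T : H →L[ℂ] H) (L : Submodule ℂ H) (hL : ∀ x ∈ L, T x ∈ L) : L →L[ℂ] L :=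
  { toLinearMap := (T : H →ₗ[ℂ] H).restrict hL
    cont := Continuous.subtype_mk (T.continuous.comp continuous_subtype_val) _ }

/-! ### Auxiliary lemmas -/

open Filter
open scoped InnerProductSpace

section Aux16

lemma gelfand_bound16 {A : Type*} [NormedRing A] [NormedAlgebra ℂ A] [CompleteSpace A]
    (a : A) {c r : ℝ} (hc : 0 ≤ c) (hcr : c < r)
    (h : ∀ z ∈ spectrum ℂ a, ‖z‖ ≤ c) :
    ∃ N : ℕ, 1 ≤ N ∧ ∀ n ≥ N, ‖a ^ n‖ ≤ r ^ n := by
  have hr : 0 < r := lt_of_le_of_lt hc hcr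
  have hρ : spectralRadius ℂ a ≤ ENNReal.ofReal c := by
    refine iSup₂_le fun z hz => ?_
    rw [← enorm_eq_nnnorm, ← ofReal_norm]
    exact ENNReal.ofReal_le_ofReal (h z hz)
  have hlt : spectralRadius ℂ a < ENNReal.ofReal r :=
    lt_of_le_of_lt hρ ((ENNReal.ofReal_lt_ofReal_iff hr).mpr hcr)
  have htend := spectrum.pow_nnnorm_pow_one_div_tendsto_nhds_spectralRadius a
  have hev : ∀ᶠ n : ℕ in atTop,
      ((‖a ^ n‖₊ : ENNReal) ^ (1 / (n : ℝ))) < ENNReal.ofReal r :=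
    htend.eventually_lt_const hlt
  obtain ⟨N, hN⟩ := hev.exists_forall_of_atTop
  refine ⟨max N 1, le_max_right _ _, fun n hn => ?_⟩
  have hn1 : 1 ≤ n := le_trans (le_max_right N 1) hn
  have hnN : N ≤ n := le_trans (le_max_left N 1) hn
  have h1 := hN n hnN
  have hne : (n : ℝ) ≠ 0 := Nat.cast_ne_zero.mpr (by omega)
  have h2 : ((‖a ^ n‖₊ : ENNReal) ^ (1 / (n : ℝ))) ^ (n : ℝ)
      < (ENNReal.ofReal r) ^ (n : ℝ) :=
    ENNReal.rpow_lt_rpow h1 (by positivity)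
  rw [← ENNReal.rpow_mul, one_div, inv_mul_cancel₀ hne, ENNReal.rpow_one] at h2
  rw [ENNReal.ofReal_rpow_of_pos hr, ← enorm_eq_nnnorm, ← ofReal_norm] at h2
  have h3 : ‖a ^ n‖ < r ^ (n : ℝ) :=
    (ENNReal.ofReal_lt_ofReal_iff_of_nonneg (norm_nonneg _)).mp h2
  rw [Real.rpow_natCast] at h3
  exact h3.le

/-- Conjugation of operator algebras by a continuous linear equivalence. -/
def conjCLE16 {H₁ H₂ : Type*} [NormedAddCommGroup H₁] [NormedSpace ℂ H₁]
    [NormedAddCommGroup H₂] [NormedSpace ℂ H₂] (φ : H₁ ≃L[ℂ] H₂) :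
    (H₁ →L[ℂ] H₁) ≃ₐ[ℂ] (H₂ →L[ℂ] H₂) where
  toFun T := (φ : H₁ →L[ℂ] H₂) ∘L T ∘L (φ.symm : H₂ →L[ℂ] H₁)
  invFun S := (φ.symm : H₂ →L[ℂ] H₁) ∘L S ∘L (φ : H₁ →L[ℂ] H₂)
  left_inv T := by ext x; simp
  right_inv S := by ext x; simp
  map_mul' T S := by ext x; simp
  map_add' T S := by ext x; simp
  commutes' z := by ext x; simp

lemma spectrum_conj16 {H₁ H₂ : Type*} [NormedAddCommGroup H₁] [NormedSpace ℂ H₁]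
    [NormedAddCommGroup H₂] [NormedSpace ℂ H₂] (φ : H₁ ≃L[ℂ] H₂)
    (T : H₁ →L[ℂ] H₁) :
    spectrum ℂ ((φ : H₁ →L[ℂ] H₂) ∘L T ∘L (φ.symm : H₂ →L[ℂ] H₁)) = spectrum ℂ T :=
  AlgEquiv.spectrum_eq (conjCLE16 φ) T

lemma hatOp_apply16 (A B : l2 →L[ℂ] l2) (p : Hl) :
    hatOp A B p = e.symm (A (e p).1, B (e p).2) := rfl

lemma e_incl₁16 (x : l2) : e (incl₁ x) = (x, 0) := by
  simp [incl₁, e]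

lemma incl₁_injective16 : Function.Injective (incl₁ : l2 →L[ℂ] Hl) := by
  intro a b h
  have := congrArg (fun p => (e p).1) h
  simpa [e_incl₁16] using this

lemma hatOp_pow_apply16 (A B : l2 →L[ℂ] l2) (n : ℕ) (p : Hl) :
    ((hatOp A B) ^ n) p = e.symm ((A ^ n) (e p).1, (B ^ n) (e p).2) := by
  induction n with
  | zero => simp
  | succ n ih =>
      rw [pow_succ', mul_apply_eq_comp, ih, hatOp_apply16]
      simp only [e, ContinuousLinearEquiv.apply_symm_apply]
      rw [pow_succ', pow_succ', mul_apply_eq_comp, mul_apply_eq_comp]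

lemma norm_pair16 (a b : l2) : ‖(e.symm (a, b) : Hl)‖ = Real.sqrt (‖a‖ ^ 2 + ‖b‖ ^ 2) :=
  WithLp.prod_norm_eq_of_L2 _

lemma norm_snd_le16 (a b : l2) : ‖b‖ ≤ ‖(e.symm (a, b) : Hl)‖ := by
  have h := Real.sqrt_le_sqrt (show ‖b‖ ^ 2 ≤ ‖a‖ ^ 2 + ‖b‖ ^ 2 by nlinarith [sq_nonneg ‖a‖])
  rw [Real.sqrt_sq (norm_nonneg b)] at h
  rw [norm_pair16]
  exact h

lemma restrictOp_coe16 {H : Type*} [NormedAddCommGroup H] [InnerProductSpace ℂ H]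
    (T : H →L[ℂ] H) (L : Submodule ℂ H) (hL : ∀ x ∈ L, T x ∈ L) (q : L) :
    ((restrictOp T L hL q : L) : H) = T (q : H) := rfl

lemma restrictOp_pow_coe16 {H : Type*} [NormedAddCommGroup H] [InnerProductSpace ℂ H]
    (T : H →L[ℂ] H) (L : Submodule ℂ H) (hL : ∀ x ∈ L, T x ∈ L) (n : ℕ) (q : L) :
    (((restrictOp T L hL ^ n) q : L) : H) = (T ^ n) (q : H) := by
  induction n with
  | zero => simp
  | succ n ih =>
      rw [pow_succ', mul_apply_eq_comp, restrictOp_coe16, ih, pow_succ', mul_apply_eq_comp]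

lemma adjoint_pow16 (U : l2 →L[ℂ] l2) (n : ℕ) :
    (adjoint U) ^ n = adjoint (U ^ n) := by
  induction n with
  | zero =>
      simp only [pow_zero]
      rw [show (1 : l2 →L[ℂ] l2) = ContinuousLinearMap.id ℂ l2 from rfl, adjoint_id]
  | succ n ih =>
      rw [pow_succ, ih, pow_succ']
      exact (adjoint_comp U (U ^ n)).symm

section shift
variable (c : ℝ) (hc : 1 ≤ c) (v : ℤ → ℝ)
  (hv : ∀ n : ℤ, v n = (2 * c) ^ (-|(n : ℝ)|))
  (V : (l2 →L[ℂ] l2)ˣ)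
  (hV : ∀ (f : l2) (n : ℤ),
      (V : l2 →L[ℂ] l2) f n = ((v n / v (n - 1) : ℝ) : ℂ) * f (n - 1))

include hc hv in
lemma vpos16 : ∀ k : ℤ, 0 < v k := by
  intro k
  rw [hv]
  have : (0:ℝ) < 2 * c := by linarith
  positivity

include hc hv in
lemma vratio16 : ∀ m k : ℤ, v m / v k = (2 * c) ^ (|(k : ℝ)| - |(m : ℝ)|) := by
  intro m k
  have h2c : (0:ℝ) < 2 * c := by linarith
  rw [hv m, hv k, ← Real.rpow_sub h2c]
  congr 1
  ring

include hV in
lemma Vsingle16 (m : ℤ) :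
    (V : l2 →L[ℂ] l2) (lp.single 2 m 1) =
      ((v (m + 1) / v m : ℝ) : ℂ) • lp.single 2 (m + 1) 1 := by
  apply lp.ext
  funext j
  rw [hV, lp.coeFn_smul, Pi.smul_apply, smul_eq_mul]
  rcases eq_or_ne j (m + 1) with h | h
  · subst h
    have h1 : m + 1 - 1 = m := by ring
    rw [h1, lp.single_apply_self, lp.single_apply_self]
  · have h1 : j - 1 ≠ m := by omega
    rw [lp.single_apply_ne _ _ _ h1, lp.single_apply_ne _ _ _ h, mul_zero, mul_zero]

include hc hv hV in
lemma Vpow_single16 (m : ℤ) (n : ℕ) :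
    ((V : l2 →L[ℂ] l2) ^ n) (lp.single 2 m 1) =
      ((v (m + n) / v m : ℝ) : ℂ) • lp.single 2 (m + n) 1 := by
  induction n with
  | zero =>
      simp only [pow_zero, one_apply_eq_self, Nat.cast_zero, add_zero]
      rw [div_self (vpos16 c hc v hv m).ne', Complex.ofReal_one, one_smul]
  | succ n ih =>
      rw [pow_succ', mul_apply_eq_comp, ih, map_smul, Vsingle16 v V hV]
      rw [smul_smul]
      have hz : v (m + n) ≠ 0 := (vpos16 c hc v hv _).ne'
      have hidx : m + (n:ℤ) + 1 = m + ((n:ℕ)+1 : ℕ) := by push_cast; ring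
      rw [← Complex.ofReal_mul]
      have : v (m + (n:ℤ)) / v m * (v (m + (n:ℤ) + 1) / v (m + (n:ℤ)))
          = v (m + ((n:ℕ)+1 : ℕ)) / v m := by
        rw [← hidx, mul_comm]
        exact div_mul_div_cancel₀ hz
      rw [this, hidx]

include hc hv hV in
lemma Vinv_pow_single16 (m : ℤ) (n : ℕ) :
    (((V⁻¹ : (l2 →L[ℂ] l2)ˣ) : l2 →L[ℂ] l2) ^ n) (lp.single 2 (m + n) 1) =
      ((v m / v (m + n) : ℝ) : ℂ) • lp.single 2 m 1 := by
  have hs : ((v (m + n) / v m : ℝ) : ℂ) ≠ 0 := by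
    have h1 := vpos16 c hc v hv (m + n)
    have h2 := vpos16 c hc v hv m
    simp only [ne_eq, Complex.ofReal_eq_zero]
    positivity
  have hVp := Vpow_single16 c hc v hv V hV m n
  have hcomp : (((V⁻¹ : (l2 →L[ℂ] l2)ˣ) : l2 →L[ℂ] l2) ^ n) *
      (((V : (l2 →L[ℂ] l2)ˣ) : l2 →L[ℂ] l2) ^ n) = 1 := by
    rw [← Units.val_pow_eq_pow_val, ← Units.val_pow_eq_pow_val, ← Units.val_mul,
      inv_pow, inv_mul_cancel, Units.val_one]
  have h0 : (((V⁻¹ : (l2 →L[ℂ] l2)ˣ) : l2 →L[ℂ] l2) ^ n)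
      ((((V : (l2 →L[ℂ] l2)ˣ) : l2 →L[ℂ] l2) ^ n) (lp.single 2 m 1)) = lp.single 2 m 1 := by
    rw [← mul_apply_eq_comp, hcomp, one_apply_eq_self]
  rw [hVp, map_smul] at h0
  have := congrArg (fun z => (((v (m + n) / v m : ℝ) : ℂ))⁻¹ • z) h0
  simp only [smul_smul, inv_mul_cancel₀ hs, one_smul] at this
  rw [this, ← Complex.ofReal_inv, inv_div]

include hc hv hV in
lemma W_lower16 (y : l2) (m : ℤ) (n : ℕ) :
    (v m / v (m + n)) * ‖y m‖ ≤
      ‖((adjoint (((V⁻¹ : (l2 →L[ℂ] l2)ˣ) : l2 →L[ℂ] l2))) ^ n) y‖ := by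
  have hinner : ⟪((adjoint (((V⁻¹ : (l2 →L[ℂ] l2)ˣ) : l2 →L[ℂ] l2))) ^ n) y,
      lp.single 2 (m + n) 1⟫_ℂ
      = ((v m / v (m + n) : ℝ) : ℂ) * ⟪y m, (1 : ℂ)⟫_ℂ := by
    rw [adjoint_pow16, adjoint_inner_left, Vinv_pow_single16 c hc v hv V hV,
      inner_smul_right, lp.inner_single_right]
  have hb := norm_inner_le_norm (𝕜 := ℂ)
    (((adjoint (((V⁻¹ : (l2 →L[ℂ] l2)ˣ) : l2 →L[ℂ] l2))) ^ n) y) (lp.single 2 (m + n) 1)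
  rw [hinner] at hb
  have hns : ‖(lp.single 2 (m + n) (1:ℂ) : l2)‖ = 1 := by
    have := lp.norm_single (p := 2) (E := fun _ : ℤ => ℂ) (by norm_num)
      (m + n) (1 : ℂ)
    simpa using this
  rw [hns, mul_one] at hb
  have hinner1 : ‖⟪y m, (1 : ℂ)⟫_ℂ‖ = ‖y m‖ := by
    rw [RCLike.inner_apply]
    simp
  calc (v m / v (m + n)) * ‖y m‖
      = ‖((v m / v (m + n) : ℝ) : ℂ)‖ * ‖⟪y m, (1 : ℂ)⟫_ℂ‖ := by
        rw [hinner1, Complex.norm_real, Real.norm_eq_abs, abs_of_nonneg]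
        have h1 := vpos16 c hc v hv m
        have h2 := vpos16 c hc v hv (m + n)
        positivity
    _ = ‖((v m / v (m + n) : ℝ) : ℂ) * ⟪y m, (1 : ℂ)⟫_ℂ‖ := (norm_mul _ _).symm
    _ ≤ _ := hb

end shift
end Aux16

set_option maxHeartbeats 10000000 in
/-- Let `V` be the weighted bilateral shift with weights `v n = (2c)^(−|n|)` (`c ≥ 1`) and
`V̂ = V ⊕ (V*)⁻¹` on `Hl`.  If `L` is a closed subspace with `V̂(L) = L` on which the induced
operator has spectrum inside `{|z| ≤ c}`, then `L = L₁ ⊕ {0}` for a closed `V`-invariant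
subspace `L₁ ≠ H₀` with `|spectrum(V|L₁)| ≤ c`; in particular `L ⊊ H₀ ⊕ {0}`. -/
theorem stmt16 (c : ℝ) (hc : 1 ≤ c)
    (v : ℤ → ℝ) (hv : ∀ n : ℤ, v n = (2 * c) ^ (-|(n : ℝ)|))
    (V : (l2 →L[ℂ] l2)ˣ)
    (hV : ∀ (f : l2) (n : ℤ),
      (V : l2 →L[ℂ] l2) f n = ((v n / v (n - 1) : ℝ) : ℂ) * f (n - 1))
    (L : Submodule ℂ Hl) (hclosed : IsClosed (L : Set Hl))
    (hmap : Submodule.map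
      ((hatOp (V : l2 →L[ℂ] l2) (adjoint ((V⁻¹ : (l2 →L[ℂ] l2)ˣ) : l2 →L[ℂ] l2))) : Hl →ₗ[ℂ] Hl) L = L)
    (hinv : ∀ x ∈ L,
      hatOp (V : l2 →L[ℂ] l2) (adjoint ((V⁻¹ : (l2 →L[ℂ] l2)ˣ) : l2 →L[ℂ] l2)) x ∈ L)
    (hspec : ∀ z ∈ spectrum ℂ
      (restrictOp (hatOp (V : l2 →L[ℂ] l2)
        (adjoint ((V⁻¹ : (l2 →L[ℂ] l2)ˣ) : l2 →L[ℂ] l2))) L hinv), ‖z‖ ≤ c) :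
    ∃ L₁ : Submodule ℂ l2,
      IsClosed (L₁ : Set l2) ∧
      L = Submodule.map (incl₁ : l2 →ₗ[ℂ] Hl) L₁ ∧
      Submodule.map ((V : l2 →L[ℂ] l2) : l2 →ₗ[ℂ] l2) L₁ = L₁ ∧
      (∃ hinv₁ : ∀ x ∈ L₁, (V : l2 →L[ℂ] l2) x ∈ L₁,
        ∀ z ∈ spectrum ℂ (restrictOp (V : l2 →L[ℂ] l2) L₁ hinv₁), ‖z‖ ≤ c) ∧
      L₁ ≠ ⊤ ∧
      L < Submodule.map (incl₁ : l2 →ₗ[ℂ] Hl) ⊤ := by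
  classical
  have hc0 : (0:ℝ) < c := lt_of_lt_of_le zero_lt_one hc
  have h2c : (0:ℝ) < 2 * c := by linarith
  have h2c1 : (1:ℝ) ≤ 2 * c := by linarith
  haveI : CompleteSpace L := hclosed.completeSpace_coe
  -- notation
  set W : l2 →L[ℂ] l2 := adjoint ((V⁻¹ : (l2 →L[ℂ] l2)ˣ) : l2 →L[ℂ] l2) with hW
  -- Gelfand bound on the restricted operator
  obtain ⟨N, hN1, hN⟩ := gelfand_bound16
    (restrictOp (hatOp (V : l2 →L[ℂ] l2) W) L hinv) hc0.le
    (show c < 3 * c / 2 by linarith) hspec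
  -- Step 1 : second components vanish
  have hy0 : ∀ p : Hl, p ∈ L → (e p).2 = 0 := by
    intro p hp
    apply lp.ext
    funext m
    rw [lp.coeFn_zero, Pi.zero_apply, ← norm_eq_zero]
    set ym : ℂ := (e p).2 m with hym
    -- the basic estimate
    have key : ∀ n : ℕ, n ≥ N → (2*c) ^ ((n:ℝ) - 2 * |(m:ℝ)|) * ‖ym‖ ≤ (3*c/2)^n * ‖p‖ := by
      intro n hn
      have hq : (⟨p, hp⟩ : L) ∈ (Set.univ : Set L) := trivial
      have h1 : (v m / v (m + n)) * ‖ym‖ ≤ ‖(W ^ n) ((e p).2)‖ :=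
        W_lower16 c hc v hv V hV ((e p).2) m n
      have h2 : ‖(W ^ n) ((e p).2)‖
          ≤ ‖e.symm ((((V : l2 →L[ℂ] l2)) ^ n) ((e p).1), (W ^ n) ((e p).2))‖ :=
        norm_snd_le16 _ _
      have h3 : e.symm ((((V : l2 →L[ℂ] l2)) ^ n) ((e p).1), (W ^ n) ((e p).2))
          = ((hatOp (V : l2 →L[ℂ] l2) W) ^ n) p := (hatOp_pow_apply16 _ _ _ _).symm
      have h4 : ((hatOp (V : l2 →L[ℂ] l2) W) ^ n) p
          = (((restrictOp (hatOp (V : l2 →L[ℂ] l2) W) L hinv ^ n) (⟨p, hp⟩ : L) : L) : Hl) :=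
        (restrictOp_pow_coe16 (hatOp (V : l2 →L[ℂ] l2) W) L hinv n (⟨p, hp⟩ : L)).symm
      have h5 : ‖((restrictOp (hatOp (V : l2 →L[ℂ] l2) W) L hinv ^ n) (⟨p, hp⟩ : L))‖
          ≤ ‖restrictOp (hatOp (V : l2 →L[ℂ] l2) W) L hinv ^ n‖ * ‖p‖ := by
        have := (restrictOp (hatOp (V : l2 →L[ℂ] l2) W) L hinv ^ n).le_opNorm (⟨p, hp⟩ : L)
        exact this
      have h6 : ‖restrictOp (hatOp (V : l2 →L[ℂ] l2) W) L hinv ^ n‖ * ‖p‖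
          ≤ (3*c/2)^n * ‖p‖ :=
        mul_le_mul_of_nonneg_right (hN n hn) (norm_nonneg p)
      have hratio : v m / v (m + n) = (2*c) ^ (|((m + n : ℤ) : ℝ)| - |(m:ℝ)|) :=
        vratio16 c hc v hv m (m + n)
      have hexp : (n:ℝ) - 2 * |(m:ℝ)| ≤ |((m + n : ℤ) : ℝ)| - |(m:ℝ)| := by
        have habs : (n:ℝ) ≤ |((m + n : ℤ) : ℝ)| + |(m:ℝ)| := by
          have h7 : |((m:ℝ) + (n:ℝ)) + (-(m:ℝ))| ≤ |(m:ℝ) + (n:ℝ)| + |(-(m:ℝ))| :=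
            abs_add_le _ _
          have h8 : ((m:ℝ) + (n:ℝ)) + (-(m:ℝ)) = (n:ℝ) := by ring
          rw [h8, abs_neg] at h7
          have h9 : (n:ℝ) ≤ |(m:ℝ) + (n:ℝ)| + |(m:ℝ)| :=
            le_trans (le_abs_self _) h7
          push_cast
          exact h9
        linarith
      have hmono : (2*c) ^ ((n:ℝ) - 2 * |(m:ℝ)|) ≤ v m / v (m + n) := by
        rw [hratio]
        exact Real.rpow_le_rpow_of_exponent_le h2c1 hexp
      calc (2*c) ^ ((n:ℝ) - 2 * |(m:ℝ)|) * ‖ym‖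
          ≤ (v m / v (m + n)) * ‖ym‖ :=
            mul_le_mul_of_nonneg_right hmono (norm_nonneg _)
        _ ≤ ‖(W ^ n) ((e p).2)‖ := h1
        _ ≤ ‖e.symm ((((V : l2 →L[ℂ] l2)) ^ n) ((e p).1), (W ^ n) ((e p).2))‖ := h2
        _ = ‖((restrictOp (hatOp (V : l2 →L[ℂ] l2) W) L hinv ^ n) (⟨p, hp⟩ : L))‖ := by
            rw [h3, h4]; rfl
        _ ≤ ‖restrictOp (hatOp (V : l2 →L[ℂ] l2) W) L hinv ^ n‖ * ‖p‖ := h5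
        _ ≤ (3*c/2)^n * ‖p‖ := h6
    -- deduce a (3/4)^n bound
    set D : ℝ := ‖p‖ * (2*c) ^ (2 * |(m:ℝ)|) with hD
    have hDnn : 0 ≤ D := by
      have := Real.rpow_pos_of_pos h2c (2 * |(m:ℝ)|)
      positivity
    have key2 : ∀ n : ℕ, n ≥ N → ‖ym‖ ≤ (3/4 : ℝ)^n * D := by
      intro n hn
      have hA : (0:ℝ) < (2*c) ^ ((n:ℝ) - 2 * |(m:ℝ)|) := Real.rpow_pos_of_pos h2c _
      have h1 := key n hn
      rw [mul_comm] at h1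
      have h2 : ‖ym‖ ≤ (3*c/2)^n * ‖p‖ / (2*c) ^ ((n:ℝ) - 2 * |(m:ℝ)|) :=
        (le_div_iff₀ hA).mpr h1
      refine le_trans h2 (le_of_eq ?_)
      rw [Real.rpow_sub h2c, Real.rpow_natCast, div_div_eq_mul_div]
      have hpow : ((3*c/2:ℝ))^n / (2*c)^n = (3/4:ℝ)^n := by
        rw [← div_pow]
        congr 1
        field_simp
        ring
      rw [show (3*c/2:ℝ)^n * ‖p‖ * (2*c)^(2*|(m:ℝ)|) / (2*c)^n
          = ((3*c/2:ℝ)^n/(2*c)^n) * (‖p‖ * (2*c)^(2*|(m:ℝ)|)) by ring, hpow, hD]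
    have htend : Tendsto (fun n : ℕ => (3/4 : ℝ)^n * D) atTop (nhds 0) := by
      have h0 := tendsto_pow_atTop_nhds_zero_of_lt_one (by norm_num : (0:ℝ) ≤ 3/4)
        (by norm_num : (3/4 : ℝ) < 1)
      simpa using h0.mul_const D
    have : ‖ym‖ ≤ 0 :=
      ge_of_tendsto htend (eventually_atTop.mpr ⟨N, key2⟩)
    exact le_antisymm this (norm_nonneg _)
  -- Step 2 : structure of L
  have hcomm : ∀ x : l2, hatOp (V : l2 →L[ℂ] l2) W (incl₁ x) = incl₁ ((V : l2 →L[ℂ] l2) x) := by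
    intro x
    rw [hatOp_apply16, e_incl₁16]
    simp only [map_zero]
    rfl
  have hrange : ∀ p : Hl, p ∈ L → p = incl₁ ((e p).1) := by
    intro p hp
    have h1 : e p = ((e p).1, (0 : l2)) := by
      rw [← hy0 p hp]
    have := congrArg e.symm h1
    rw [e.symm_apply_apply] at this
    exact this
  set L₁ : Submodule ℂ l2 := L.comap (incl₁ : l2 →ₗ[ℂ] Hl) with hL₁
  have hmem : ∀ x : l2, x ∈ L₁ ↔ incl₁ x ∈ L := fun x => Iff.rfl
  have hL1closed : IsClosed (L₁ : Set l2) := by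
    have : (L₁ : Set l2) = (incl₁ : l2 →L[ℂ] Hl) ⁻¹' (L : Set Hl) := rfl
    rw [this]
    exact hclosed.preimage incl₁.continuous
  have hLeq : L = Submodule.map (incl₁ : l2 →ₗ[ℂ] Hl) L₁ := by
    apply le_antisymm
    · intro p hp
      refine ⟨(e p).1, ?_, (hrange p hp).symm⟩
      show incl₁ ((e p).1) ∈ L
      rw [← hrange p hp]
      exact hp
    · rintro p ⟨x, hx, rfl⟩
      exact hx
  have hinv₁ : ∀ x ∈ L₁, (V : l2 →L[ℂ] l2) x ∈ L₁ := by
    intro x hx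
    show incl₁ ((V : l2 →L[ℂ] l2) x) ∈ L
    rw [← hcomm]
    exact hinv _ hx
  have hmap₁ : Submodule.map ((V : l2 →L[ℂ] l2) : l2 →ₗ[ℂ] l2) L₁ = L₁ := by
    apply le_antisymm
    · rintro _ ⟨x, hx, rfl⟩
      exact hinv₁ x hx
    · intro x hx
      have hxL : incl₁ x ∈ L := hx
      rw [← hmap] at hxL
      obtain ⟨p, hp, hpx⟩ := hxL
      have hp' : p = incl₁ ((e p).1) := hrange p hp
      have hep : (e p).1 ∈ L₁ := by
        show incl₁ ((e p).1) ∈ L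
        rw [← hp']
        exact hp
      refine ⟨(e p).1, hep, ?_⟩
      have : incl₁ ((V : l2 →L[ℂ] l2) ((e p).1)) = incl₁ x := by
        rw [← hcomm, ← hp']
        exact hpx
      exact incl₁_injective16 this
  -- the equivalence L₁ ≃L L
  have hψmem : ∀ q : L, (e (q : Hl)).1 ∈ L₁ := by
    intro q
    show incl₁ ((e (q : Hl)).1) ∈ L
    rw [← hrange _ q.2]
    exact q.2
  let φL : L₁ ≃ₗ[ℂ] L :=
  { toFun := fun x => ⟨incl₁ (x : l2), x.2⟩
    invFun := fun q => ⟨(e (q : Hl)).1, hψmem q⟩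
    map_add' := fun a b => by
      apply Subtype.ext
      simp
    map_smul' := fun r a => by
      apply Subtype.ext
      simp
    left_inv := fun x => by
      apply Subtype.ext
      show (e (incl₁ (x : l2))).1 = (x : l2)
      rw [e_incl₁16]
    right_inv := fun q => by
      apply Subtype.ext
      exact (hrange _ q.2).symm }
  let φ : L₁ ≃L[ℂ] L :=
  { toLinearEquiv := φL
    continuous_toFun := Continuous.subtype_mk (incl₁.continuous.comp continuous_subtype_val) _
    continuous_invFun := Continuous.subtype_mk
      (continuous_fst.comp ((e : Hl ≃L[ℂ] l2 × l2).continuous.comp continuous_subtype_val)) _ }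
  have hconj : (φ : L₁ →L[ℂ] L) ∘L (restrictOp (V : l2 →L[ℂ] l2) L₁ hinv₁) ∘L
      (φ.symm : L →L[ℂ] L₁) = restrictOp (hatOp (V : l2 →L[ℂ] l2) W) L hinv := by
    ext q
    show incl₁ ((V : l2 →L[ℂ] l2) ((e (q : Hl)).1)) = hatOp (V : l2 →L[ℂ] l2) W (q : Hl)
    conv_rhs => rw [hrange (q : Hl) q.2]
    rw [hcomm]
  have hspec₁ : ∀ z ∈ spectrum ℂ (restrictOp (V : l2 →L[ℂ] l2) L₁ hinv₁), ‖z‖ ≤ c := by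
    intro z hz
    apply hspec
    rw [← hconj, spectrum_conj16]
    exact hz
  -- L₁ ≠ ⊤
  have hL1top : L₁ ≠ ⊤ := by
    intro htop
    haveI : CompleteSpace L₁ := hL1closed.completeSpace_coe
    obtain ⟨M, hM1, hM⟩ := gelfand_bound16 (restrictOp (V : l2 →L[ℂ] l2) L₁ hinv₁) hc0.le
      (show c < 3 * c / 2 by linarith) (fun z hz => hspec₁ z hz)
    have hqmem : (lp.single 2 (-(M:ℤ)) 1 : l2) ∈ L₁ := by
      rw [htop]; trivial
    set q : L₁ := ⟨lp.single 2 (-(M:ℤ)) 1, hqmem⟩ with hq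
    have hval : (((restrictOp (V : l2 →L[ℂ] l2) L₁ hinv₁ ^ M) q : L₁) : l2)
        = ((v (-(M:ℤ) + M) / v (-(M:ℤ)) : ℝ) : ℂ) • lp.single 2 (-(M:ℤ) + M) 1 := by
      rw [restrictOp_pow_coe16]
      exact Vpow_single16 c hc v hv V hV (-(M:ℤ)) M
    have hidx : -(M:ℤ) + M = 0 := by ring
    have hsc : v (-(M:ℤ) + M) / v (-(M:ℤ)) = (2*c) ^ (M:ℕ) := by
      rw [hidx, vratio16 c hc v hv 0 (-(M:ℤ))]
      push_cast
      rw [abs_neg, abs_zero, abs_of_nonneg (Nat.cast_nonneg M), sub_zero, Real.rpow_natCast]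
    have hnq : ‖q‖ = 1 := by
      show ‖(lp.single 2 (-(M:ℤ)) (1:ℂ) : l2)‖ = 1
      have := lp.norm_single (p := 2) (E := fun _ : ℤ => ℂ) (by norm_num)
        (-(M:ℤ)) (1 : ℂ)
      simpa using this
    have hlow : ((2*c) ^ (M:ℕ) : ℝ) = ‖(restrictOp (V : l2 →L[ℂ] l2) L₁ hinv₁ ^ M) q‖ := by
      have : ‖(restrictOp (V : l2 →L[ℂ] l2) L₁ hinv₁ ^ M) q‖
          = ‖(((restrictOp (V : l2 →L[ℂ] l2) L₁ hinv₁ ^ M) q : L₁) : l2)‖ := rfl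
      rw [this, hval, norm_smul, hsc]
      have hns : ‖(lp.single 2 (-(M:ℤ) + M) (1:ℂ) : l2)‖ = 1 := by
        have := lp.norm_single (p := 2) (E := fun _ : ℤ => ℂ) (by norm_num)
          (-(M:ℤ) + M) (1 : ℂ)
        simpa using this
      rw [hns, mul_one, Complex.norm_real, Real.norm_eq_abs, abs_of_nonneg (by positivity)]
    have hup : ‖(restrictOp (V : l2 →L[ℂ] l2) L₁ hinv₁ ^ M) q‖ ≤ (3*c/2)^M := by
      calc ‖(restrictOp (V : l2 →L[ℂ] l2) L₁ hinv₁ ^ M) q‖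
          ≤ ‖restrictOp (V : l2 →L[ℂ] l2) L₁ hinv₁ ^ M‖ * ‖q‖ := le_opNorm _ _
        _ = ‖restrictOp (V : l2 →L[ℂ] l2) L₁ hinv₁ ^ M‖ := by rw [hnq, mul_one]
        _ ≤ (3*c/2)^M := hM M le_rfl
    have hcon : ((2*c) ^ (M:ℕ) : ℝ) ≤ (3*c/2)^M := hlow ▸ hup
    have : ((3*c/2 : ℝ))^M < ((2*c) ^ (M:ℕ) : ℝ) := by
      apply pow_lt_pow_left₀ (by linarith) (by positivity)
      omega
    linarith
  -- conclusion
  refine ⟨L₁, hL1closed, hLeq, hmap₁, ⟨hinv₁, hspec₁⟩, hL1top, ?_⟩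
  rw [hLeq]
  refine lt_of_le_of_ne (Submodule.map_mono le_top) ?_
  intro heq
  exact hL1top (Submodule.map_injective_of_injective incl₁_injective16 heq)
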